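/- For each of the six ordered pairs (→1,←1), (←1,→1), (→1,→2), (→2,←2), (←2,←1), (←2,→2), there exists a minimal conformation of length 6 whose two windows Γ₃, Γ₄ have these directed types, respectively. -/
import Mathlib


/-- Points of the cubic lattice `ℤ³`. -/
abbrev P3 : Type := Fin 3 → ℤ

def e1 : P3 := ![1, 0, 0]
def e2 : P3 := ![0, 1, 0]
def e3 : P3 := ![0, 0, 1]

/-- Squared Euclidean norm of an integer vector; it equals `1` iff the
Euclidean norm equals `1`. -/
def sqNorm (v : P3) : ℤ := ∑ k, (v k) ^ 2

/-- A conformation of length `N`: an injective map on `{1, …, N}` whose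
consecutive steps have Euclidean length one. -/
def IsConformation (N : ℕ) (Γ : ℕ → P3) : Prop :=
  Set.InjOn Γ (Set.Icc 1 N) ∧ ∀ i, 1 ≤ i → i < N → sqNorm (Γ (i + 1) - Γ i) = 1

/-- A lattice rotation: an orthogonal integer matrix of determinant one
(equivalently, a linear isometry of `ℝ³` mapping `ℤ³` onto `ℤ³` with
determinant one). -/
def IsLatticeRotation (R : Matrix (Fin 3) (Fin 3) ℤ) : Prop :=
  R.transpose * R = 1 ∧ R.det = 1

/-- Equivalence of length-5 conformations: `Δ' k = R (Δ k) + t` for a lattice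
rotation `R` and translation `t ∈ ℤ³`. -/
def Equiv5 (Δ Δ' : Fin 5 → P3) : Prop :=
  ∃ (R : Matrix (Fin 3) (Fin 3) ℤ) (t : P3),
    IsLatticeRotation R ∧ ∀ k, Δ' k = R.mulVec (Δ k) + t

/-- Reversal of a length-5 conformation (`k ↦ Δ (6 - k)` in 1-based indexing). -/
def rev5 (Δ : Fin 5 → P3) : Fin 5 → P3 := fun k => Δ k.rev

/-- Conformation 1: vertices (0,0,0), (1,0,0), (1,1,0), (0,1,0), (0,1,1). -/
def conf1 : Fin 5 → P3 := ![![0, 0, 0], ![1, 0, 0], ![1, 1, 0], ![0, 1, 0], ![0, 1, 1]]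

/-- Conformation 2: vertices (0,0,0), (0,1,0), (−1,1,0), (−1,1,1), (−1,0,1). -/
def conf2 : Fin 5 → P3 := ![![0, 0, 0], ![0, 1, 0], ![-1, 1, 0], ![-1, 1, 1], ![-1, 0, 1]]

/-- The `i`-th window of `Γ`: the 5-tuple `(Γ(i-2), …, Γ(i+2))`. -/
def window (Γ : ℕ → P3) (i : ℕ) : Fin 5 → P3 := fun k => Γ (i - 2 + (k : ℕ))

/-- `Φ(Δ) = 1`: the 5-tuple `Δ` or its reversal is equivalent to
conformation 1 or to conformation 2. -/
def WindowGood (Δ : Fin 5 → P3) : Prop :=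
  Equiv5 Δ conf1 ∨ Equiv5 (rev5 Δ) conf1 ∨ Equiv5 Δ conf2 ∨ Equiv5 (rev5 Δ) conf2

open Classical in
/-- The function `Φ` on length-5 conformations. -/
noncomputable def Phi (Δ : Fin 5 → P3) : ℤ := if WindowGood Δ then 1 else 0

/-- The energy `E₅(Γ) = −Σ_{i=3}^{N−2} Φ(Γ_i)`. -/
noncomputable def E5 (N : ℕ) (Γ : ℕ → P3) : ℤ :=
  -∑ i ∈ Finset.Icc 3 (N - 2), Phi (window Γ i)

/-- A minimal conformation: a conformation all of whose windows satisfy `Φ = 1`. -/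
def IsMinimal (N : ℕ) (Γ : ℕ → P3) : Prop :=
  IsConformation N Γ ∧ ∀ i, 3 ≤ i → i ≤ N - 2 → WindowGood (window Γ i)

/-- The walk starting at the origin (in 1-based indexing) whose steps
cyclically repeat the given list. -/
def cyclicWalk (steps : List P3) : ℕ → P3
  | 0 => 0
  | 1 => 0
  | n + 2 => cyclicWalk steps (n + 1) + steps.getD (n % steps.length) 0

/-- The 16-term step sequence of the lattice α-helix. -/
def alphaStepList : List P3 :=
  [e1, e2, -e1, e3, -e2, e1, e2, e3, -e1, -e2, e1, e3, e2, -e1, -e2, e3]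

/-- The 4-term step sequence of the lattice β-strand. -/
def betaStepList : List P3 := [e1, e2, -e1, e3]

/-- The lattice α-helix (`H(1) = 0`, steps cyclically repeating `alphaStepList`). -/
def alphaHelix : ℕ → P3 := cyclicWalk alphaStepList

/-- The lattice β-strand (`B(1) = 0`, steps cyclically repeating `betaStepList`). -/
def betaStrand : ℕ → P3 := cyclicWalk betaStepList

/-- The four directed types of windows. -/
inductive DType : Type
  | r1  -- →1
  | l1  -- ←1
  | r2  -- →2
  | l2  -- ←2
deriving DecidableEq

/-- A window `Δ` has directed type `→1` (resp. `→2`) if it is equivalent to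
conformation 1 (resp. 2), and `←1` (resp. `←2`) if its reversal is. -/
def HasType (Δ : Fin 5 → P3) : DType → Prop
  | DType.r1 => Equiv5 Δ conf1
  | DType.l1 => Equiv5 (rev5 Δ) conf1
  | DType.r2 => Equiv5 Δ conf2
  | DType.l2 => Equiv5 (rev5 Δ) conf2

/-- The six allowed ordered pairs of directed types of consecutive windows:
(→1,←1), (←1,→1), (→1,→2), (→2,←2), (←2,←1), (←2,→2). -/
def allowedPairs : List (DType × DType) :=
  [(DType.r1, DType.l1), (DType.l1, DType.r1), (DType.r1, DType.r2),
   (DType.r2, DType.l2), (DType.l2, DType.l1), (DType.l2, DType.r2)]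

/-- `w` is the type sequence of `Γ` (a conformation of length `N`):
`w` has length `N − 4` and its `j`-th letter is the directed type of the
window `Γ_{3+j}`, `j = 0, …, N−5`. -/
def HasTypeSeq (N : ℕ) (Γ : ℕ → P3) (w : List DType) : Prop :=
  w.length = N - 4 ∧ ∀ j (h : j < w.length), HasType (window Γ (3 + j)) (w.get ⟨j, h⟩)

/-- The word `α = →1→2←2←1`. -/
def wordAlpha : List DType := [DType.r1, DType.r2, DType.l2, DType.l1]

/-- The word `β = →1←1`. -/
def wordBeta : List DType := [DType.r1, DType.l1]

/-- `v` is a finite concatenation of copies of the words `α` and `β`. -/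
def IsABConcat (v : List DType) : Prop :=
  ∃ L : List (List DType), (∀ u ∈ L, u = wordAlpha ∨ u = wordBeta) ∧ v = L.flatten

/-- A word is admissible if it is a contiguous subword (factor) of some finite
concatenation of copies of `α` and `β`. -/
def Admissible (w : List DType) : Prop := ∃ v, IsABConcat v ∧ w <:+: v

/-- The two kinds of monomers. -/
inductive AB : Type
  | A
  | B
deriving DecidableEq

/-- The number of occurrences of the letter `c` in the `i`-th 5-tuple
`S(i−2), …, S(i+2)` of the sequence `S`. -/
def countLetter (c : AB) (S : ℕ → AB) (i : ℕ) : ℕ :=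
  ((Finset.Icc (i - 2) (i + 2)).filter fun k => S k = c).card

open Classical in
/-- `Φ₁(Δ) = 1` iff `Δ` or its reversal is equivalent to conformation 1. -/
noncomputable def Phi1 (Δ : Fin 5 → P3) : ℝ :=
  if Equiv5 Δ conf1 ∨ Equiv5 (rev5 Δ) conf1 then 1 else 0

open Classical in
/-- `Φ₂(Δ) = 1` iff `Δ` or its reversal is equivalent to conformation 2. -/
noncomputable def Phi2 (Δ : Fin 5 → P3) : ℝ :=
  if Equiv5 Δ conf2 ∨ Equiv5 (rev5 Δ) conf2 then 1 else 0

/-- The heteropolymer energy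
`E₅′(S,Γ) = −Σᵢ [#_B(Sᵢ)(Φ₁(Γᵢ) + ε Φ₂(Γᵢ)) + #_A(Sᵢ)(Φ₂(Γᵢ) + ε Φ₁(Γᵢ))]`. -/
noncomputable def E5' (ε : ℝ) (S : ℕ → AB) (N : ℕ) (Γ : ℕ → P3) : ℝ :=
  -∑ i ∈ Finset.Icc 3 (N - 2),
    ((countLetter AB.B S i : ℝ) * (Phi1 (window Γ i) + ε * Phi2 (window Γ i)) +
      (countLetter AB.A S i : ℝ) * (Phi2 (window Γ i) + ε * Phi1 (window Γ i)))

lemma hasType_windowGood (Δ : Fin 5 → P3) (d : DType) (h : HasType Δ d) :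
    WindowGood Δ := by
  cases d
  · exact Or.inl h
  · exact Or.inr (Or.inl h)
  · exact Or.inr (Or.inr (Or.inl h))
  · exact Or.inr (Or.inr (Or.inr h))

def walk1 : ℕ → P3 := fun n => [![9, 9, 9], ![0, 0, 0], ![1, 0, 0], ![1, 1, 0], ![0, 1, 0], ![0, 1, 1], ![1, 1, 1]].getD n 0

lemma walk1_type3 : HasType (window walk1 3) DType.r1 :=
  ⟨!![1, 0, 0; 0, 1, 0; 0, 0, 1], ![0, 0, 0], ⟨by decide, by decide⟩, by decide⟩

lemma walk1_type4 : HasType (window walk1 4) DType.l1 :=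
  ⟨!![-1, 0, 0; 0, 0, -1; 0, -1, 0], ![1, 1, 1], ⟨by decide, by decide⟩, by decide⟩

lemma walk1_min : IsMinimal 6 walk1 := by
  refine ⟨⟨?_, ?_⟩, ?_⟩
  · intro x hx y hy
    simp only [Set.mem_Icc] at hx hy
    obtain ⟨hx1, hx2⟩ := hx; obtain ⟨hy1, hy2⟩ := hy
    interval_cases x <;> interval_cases y <;> decide
  · intro i h1 h2
    interval_cases i <;> decide
  · intro i h1 h2
    have h2' : i ≤ 4 := h2
    interval_cases i
    · exact hasType_windowGood _ _ walk1_type3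
    · exact hasType_windowGood _ _ walk1_type4


def walk2 : ℕ → P3 := fun n => [![9, 9, 9], ![0, 0, 0], ![1, 0, 0], ![1, 1, 0], ![1, 1, 1], ![1, 0, 1], ![2, 0, 1]].getD n 0

lemma walk2_type3 : HasType (window walk2 3) DType.l1 :=
  ⟨!![0, 1, 0; 0, 0, -1; -1, 0, 0], ![0, 1, 1], ⟨by decide, by decide⟩, by decide⟩

lemma walk2_type4 : HasType (window walk2 4) DType.r1 :=
  ⟨!![0, 1, 0; 0, 0, 1; 1, 0, 0], ![0, 0, -1], ⟨by decide, by decide⟩, by decide⟩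

lemma walk2_min : IsMinimal 6 walk2 := by
  refine ⟨⟨?_, ?_⟩, ?_⟩
  · intro x hx y hy
    simp only [Set.mem_Icc] at hx hy
    obtain ⟨hx1, hx2⟩ := hx; obtain ⟨hy1, hy2⟩ := hy
    interval_cases x <;> interval_cases y <;> decide
  · intro i h1 h2
    interval_cases i <;> decide
  · intro i h1 h2
    have h2' : i ≤ 4 := h2
    interval_cases i
    · exact hasType_windowGood _ _ walk2_type3
    · exact hasType_windowGood _ _ walk2_type4


def walk3 : ℕ → P3 := fun n => [![9, 9, 9], ![0, 0, 0], ![1, 0, 0], ![1, 1, 0], ![0, 1, 0], ![0, 1, 1], ![0, 0, 1]].getD n 0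

lemma walk3_type3 : HasType (window walk3 3) DType.r1 :=
  ⟨!![1, 0, 0; 0, 1, 0; 0, 0, 1], ![0, 0, 0], ⟨by decide, by decide⟩, by decide⟩

lemma walk3_type4 : HasType (window walk3 4) DType.r2 :=
  ⟨!![1, 0, 0; 0, 1, 0; 0, 0, 1], ![-1, 0, 0], ⟨by decide, by decide⟩, by decide⟩

lemma walk3_min : IsMinimal 6 walk3 := by
  refine ⟨⟨?_, ?_⟩, ?_⟩
  · intro x hx y hy
    simp only [Set.mem_Icc] at hx hy
    obtain ⟨hx1, hx2⟩ := hx; obtain ⟨hy1, hy2⟩ := hy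
    interval_cases x <;> interval_cases y <;> decide
  · intro i h1 h2
    interval_cases i <;> decide
  · intro i h1 h2
    have h2' : i ≤ 4 := h2
    interval_cases i
    · exact hasType_windowGood _ _ walk3_type3
    · exact hasType_windowGood _ _ walk3_type4


def walk4 : ℕ → P3 := fun n => [![9, 9, 9], ![0, 0, 0], ![1, 0, 0], ![1, 1, 0], ![1, 1, 1], ![0, 1, 1], ![0, 0, 1]].getD n 0

lemma walk4_type3 : HasType (window walk4 3) DType.r2 :=
  ⟨!![0, -1, 0; 1, 0, 0; 0, 0, 1], ![0, 0, 0], ⟨by decide, by decide⟩, by decide⟩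

lemma walk4_type4 : HasType (window walk4 4) DType.l2 :=
  ⟨!![-1, 0, 0; 0, 1, 0; 0, 0, -1], ![0, 0, 1], ⟨by decide, by decide⟩, by decide⟩

lemma walk4_min : IsMinimal 6 walk4 := by
  refine ⟨⟨?_, ?_⟩, ?_⟩
  · intro x hx y hy
    simp only [Set.mem_Icc] at hx hy
    obtain ⟨hx1, hx2⟩ := hx; obtain ⟨hy1, hy2⟩ := hy
    interval_cases x <;> interval_cases y <;> decide
  · intro i h1 h2
    interval_cases i <;> decide
  · intro i h1 h2
    have h2' : i ≤ 4 := h2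
    interval_cases i
    · exact hasType_windowGood _ _ walk4_type3
    · exact hasType_windowGood _ _ walk4_type4


def walk5 : ℕ → P3 := fun n => [![9, 9, 9], ![0, 0, 0], ![1, 0, 0], ![1, 1, 0], ![1, 1, -1], ![0, 1, -1], ![0, 1, 0]].getD n 0

lemma walk5_type3 : HasType (window walk5 3) DType.l2 :=
  ⟨!![0, 0, -1; 1, 0, 0; 0, -1, 0], ![-1, 0, 1], ⟨by decide, by decide⟩, by decide⟩

lemma walk5_type4 : HasType (window walk5 4) DType.l1 :=
  ⟨!![0, 0, -1; 1, 0, 0; 0, -1, 0], ![0, 0, 1], ⟨by decide, by decide⟩, by decide⟩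

lemma walk5_min : IsMinimal 6 walk5 := by
  refine ⟨⟨?_, ?_⟩, ?_⟩
  · intro x hx y hy
    simp only [Set.mem_Icc] at hx hy
    obtain ⟨hx1, hx2⟩ := hx; obtain ⟨hy1, hy2⟩ := hy
    interval_cases x <;> interval_cases y <;> decide
  · intro i h1 h2
    interval_cases i <;> decide
  · intro i h1 h2
    have h2' : i ≤ 4 := h2
    interval_cases i
    · exact hasType_windowGood _ _ walk5_type3
    · exact hasType_windowGood _ _ walk5_type4


def walk6 : ℕ → P3 := fun n => [![9, 9, 9], ![0, 0, 0], ![1, 0, 0], ![1, 1, 0], ![1, 1, -1], ![0, 1, -1], ![0, 0, -1]].getD n 0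

lemma walk6_type3 : HasType (window walk6 3) DType.l2 :=
  ⟨!![0, 0, -1; 1, 0, 0; 0, -1, 0], ![-1, 0, 1], ⟨by decide, by decide⟩, by decide⟩

lemma walk6_type4 : HasType (window walk6 4) DType.r2 :=
  ⟨!![0, 0, 1; 0, 1, 0; -1, 0, 0], ![0, 0, 1], ⟨by decide, by decide⟩, by decide⟩

lemma walk6_min : IsMinimal 6 walk6 := by
  refine ⟨⟨?_, ?_⟩, ?_⟩
  · intro x hx y hy
    simp only [Set.mem_Icc] at hx hy
    obtain ⟨hx1, hx2⟩ := hx; obtain ⟨hy1, hy2⟩ := hy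
    interval_cases x <;> interval_cases y <;> decide
  · intro i h1 h2
    interval_cases i <;> decide
  · intro i h1 h2
    have h2' : i ≤ 4 := h2
    interval_cases i
    · exact hasType_windowGood _ _ walk6_type3
    · exact hasType_windowGood _ _ walk6_type4

/-- each of the six ordered pairs (→1,←1), (←1,→1), (→1,→2),
(→2,←2), (←2,←1), (←2,→2) is realized as the pair of directed types of the two
windows `Γ₃, Γ₄` of some minimal conformation of length 6. -/
theorem allowed_pairs_realized :
    ∀ p ∈ allowedPairs, ∃ Γ : ℕ → P3, IsMinimal 6 Γ ∧
      HasType (window Γ 3) p.1 ∧ HasType (window Γ 4) p.2 := by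
  intro p hp
  simp only [allowedPairs, List.mem_cons, List.not_mem_nil, or_false] at hp
  rcases hp with h|h|h|h|h|h <;> subst h
  · exact ⟨walk1, walk1_min, walk1_type3, walk1_type4⟩
  · exact ⟨walk2, walk2_min, walk2_type3, walk2_type4⟩
  · exact ⟨walk3, walk3_min, walk3_type3, walk3_type4⟩
  · exact ⟨walk4, walk4_min, walk4_type3, walk4_type4⟩
  · exact ⟨walk5, walk5_min, walk5_type3, walk5_type4⟩
  · exact ⟨walk6, walk6_min, walk6_type3, walk6_type4⟩
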